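/- (Elliptical potential bound) Let x₁,...,x_T ∈ ℝ^d with ‖x_t‖₂ ≤ B for all t, fix σ ≥ B², and define Σ_t = Σ_{τ=1}^t x_τ x_τᵀ + σ I for t ∈ {0,1,...,T} (with Σ₀ = σI). Then Σ_{t=1}^T ‖x_t‖_{Σ_{t−1}^{-1}} ≤ sqrt( 2 d T log(1 + T B² / (σ d)) ), where ‖x‖_A = sqrt(xᵀ A x). -/

import Mathlib

open Matrix Finset

section EPLAux

variable {d : ℕ}

lemma epl_vecMulVec_posSemidef (u : Fin d → ℝ) : (vecMulVec u u).PosSemidef := by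
  have h : vecMulVec u u = (replicateRow Unit u)ᴴ * replicateRow Unit u := by
    rw [vecMulVec_eq Unit]
    ext i j
    simp [vecMulVec, mul_apply, replicateRow, replicateCol, mul_comm]
  rw [h]
  exact posSemidef_conjTranspose_mul_self _

lemma epl_smul_one_posDef {σ : ℝ} (hσ : 0 < σ) :
    (σ • (1 : Matrix (Fin d) (Fin d) ℝ)).PosDef := by
  rw [smul_one_eq_diagonal]
  exact PosDef.diagonal fun _ => hσ

lemma epl_sum_posSemidef (x : ℕ → Fin d → ℝ) (t : ℕ) :
    (∑ τ ∈ Finset.range t, vecMulVec (x τ) (x τ)).PosSemidef := by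
  induction t with
  | zero => simpa using Matrix.PosSemidef.zero
  | succ n ih =>
      rw [Finset.sum_range_succ]
      exact ih.add (epl_vecMulVec_posSemidef _)

lemma epl_posDef (x : ℕ → Fin d → ℝ) {σ : ℝ} (hσ : 0 < σ) (t : ℕ) :
    ((∑ τ ∈ Finset.range t, vecMulVec (x τ) (x τ)) + σ • (1 : Matrix (Fin d) (Fin d) ℝ)).PosDef :=
  Matrix.PosDef.posSemidef_add (epl_sum_posSemidef x t) (epl_smul_one_posDef hσ)

lemma epl_quad_lower (x : ℕ → Fin d → ℝ) (σ : ℝ) (t : ℕ) (y : Fin d → ℝ) :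
    σ * (y ⬝ᵥ y) ≤ y ⬝ᵥ (((∑ τ ∈ Finset.range t, vecMulVec (x τ) (x τ)) +
      σ • (1 : Matrix (Fin d) (Fin d) ℝ)) *ᵥ y) := by
  rw [add_mulVec, dotProduct_add, smul_mulVec, one_mulVec, dotProduct_smul]
  have h : 0 ≤ y ⬝ᵥ ((∑ τ ∈ Finset.range t, vecMulVec (x τ) (x τ)) *ᵥ y) := by
    have h2 := (epl_sum_posSemidef x t).dotProduct_mulVec_nonneg y
    rwa [star_trivial] at h2
  simp only [smul_eq_mul]
  linarith

lemma epl_det_rank_one (A : Matrix (Fin d) (Fin d) ℝ) (hA : IsUnit A.det) (u : Fin d → ℝ) :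
    (A + vecMulVec u u).det = A.det * (1 + u ⬝ᵥ (A⁻¹ *ᵥ u)) := by
  rw [vecMulVec_eq Unit, Matrix.det_add_replicateCol_mul_replicateRow hA]
  congr 1
  rw [det_unique]
  simp [Matrix.mul_apply, dotProduct, mulVec, dotProduct, Finset.mul_sum, Finset.sum_mul,
    mul_comm, mul_assoc, mul_left_comm]
  rw [Finset.sum_comm]
  exact Finset.sum_congr rfl fun a _ => Finset.sum_congr rfl fun b _ => by ring

lemma epl_det_le_trace_pow (hd : 0 < d) {A : Matrix (Fin d) (Fin d) ℝ} (hA : A.PosDef) :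
    A.det ≤ (A.trace / d) ^ d := by
  have herm := hA.isHermitian
  have htr : A.trace = ∑ i, herm.eigenvalues i := by
    simpa using herm.trace_eq_sum_eigenvalues
  have hz : ∀ i ∈ Finset.univ, (0:ℝ) ≤ herm.eigenvalues i :=
    fun i _ => (hA.eigenvalues_pos i).le
  have hd' : (d:ℝ) ≠ 0 := Nat.cast_ne_zero.mpr hd.ne'
  have hgm := Real.geom_mean_le_arith_mean_weighted Finset.univ
    (fun _ => 1/(d:ℝ)) (fun i => herm.eigenvalues i)
    (fun i _ => by positivity) (by simp [Finset.card_univ]; field_simp) hz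
  rw [Real.finset_prod_rpow _ _ hz] at hgm
  have hprod : (0:ℝ) ≤ ∏ i, herm.eigenvalues i := Finset.prod_nonneg hz
  have key : (∏ i, herm.eigenvalues i) ≤ (∑ i, (1/(d:ℝ)) * herm.eigenvalues i) ^ d := by
    calc (∏ i, herm.eigenvalues i)
        = (((∏ i, herm.eigenvalues i) ^ (1/(d:ℝ))) ^ (d:ℝ)) := by
          rw [← Real.rpow_mul hprod]
          field_simp
          simp
      _ ≤ ((∑ i, (1/(d:ℝ)) * herm.eigenvalues i) ^ (d:ℝ)) := by
          apply Real.rpow_le_rpow (Real.rpow_nonneg hprod _) hgm (by positivity)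
      _ = _ := by
          rw [Real.rpow_natCast]
  rw [herm.det_eq_prod_eigenvalues]
  calc (∏ i, herm.eigenvalues i) ≤ _ := key
    _ = (A.trace / d) ^ d := by
        rw [htr, ← Finset.mul_sum, div_eq_mul_inv, mul_comm]
        ring_nf

lemma epl_scalar_log {u : ℝ} (h0 : 0 ≤ u) (h1 : u ≤ 1) : u ≤ 2 * Real.log (1 + u) := by
  have hu : (0:ℝ) < 1 + u := by linarith
  have h2 : Real.exp (u/2) ≤ 1 + u := by
    have h3 := Real.add_one_le_exp (-(u/2))
    have h4 : Real.exp (u/2) * Real.exp (-(u/2)) = 1 := by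
      rw [← Real.exp_add]; ring_nf; exact Real.exp_zero
    nlinarith [Real.exp_pos (u/2), Real.exp_pos (-(u/2))]
  have := (Real.le_log_iff_exp_le hu).mpr h2
  linarith

end EPLAux

open Matrix in
theorem stmt_12 (d T : ℕ) (hd : 0 < d) (x : ℕ → Fin d → ℝ) (B σ : ℝ) (hB : 0 < B)
    (hx : ∀ t < T, Real.sqrt (∑ i, x t i ^ 2) ≤ B) (hσ : B ^ 2 ≤ σ) :
    ∑ t ∈ Finset.range T,
        Real.sqrt (x t ⬝ᵥ
          ((((∑ τ ∈ Finset.range t, Matrix.vecMulVec (x τ) (x τ)) +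
              σ • (1 : Matrix (Fin d) (Fin d) ℝ))⁻¹) *ᵥ x t)) ≤
      Real.sqrt (2 * d * T * Real.log (1 + T * B ^ 2 / (σ * d))) := by
  have hB2 : (0:ℝ) < B ^ 2 := by positivity
  have hσ0 : (0:ℝ) < σ := lt_of_lt_of_le hB2 hσ
  set S : ℕ → Matrix (Fin d) (Fin d) ℝ := fun t =>
    (∑ τ ∈ Finset.range t, vecMulVec (x τ) (x τ)) + σ • 1 with hS
  set q : ℕ → ℝ := fun t => x t ⬝ᵥ ((S t)⁻¹ *ᵥ x t) with hqdef
  have hpos : ∀ t, (S t).PosDef := fun t => epl_posDef x hσ0 t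
  -- q nonneg
  have hq0 : ∀ t, 0 ≤ q t := by
    intro t
    have h := ((hpos t).inv).posSemidef.dotProduct_mulVec_nonneg (x t)
    rwa [star_trivial] at h
  -- q t ≤ 1 for t < T
  have hxx : ∀ t < T, x t ⬝ᵥ x t ≤ B ^ 2 := by
    intro t ht
    have h1 : x t ⬝ᵥ x t = ∑ i, x t i ^ 2 := by
      simp [dotProduct, pow_two]
    have h2 : (0:ℝ) ≤ ∑ i, x t i ^ 2 := Finset.sum_nonneg fun i _ => sq_nonneg _
    have h3 := hx t ht
    calc x t ⬝ᵥ x t = Real.sqrt (∑ i, x t i ^ 2) ^ 2 := by rw [Real.sq_sqrt h2, h1]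
      _ ≤ B ^ 2 := by
          apply pow_le_pow_left₀ (Real.sqrt_nonneg _) h3
  have hq1 : ∀ t < T, q t ≤ 1 := by
    intro t ht
    set y : Fin d → ℝ := (S t)⁻¹ *ᵥ x t with hy
    have hSy : S t *ᵥ y = x t := by
      rw [hy, mulVec_mulVec, Matrix.mul_nonsing_inv _ (isUnit_iff_ne_zero.mpr (hpos t).det_pos.ne'), one_mulVec]
    have hlow : σ * (y ⬝ᵥ y) ≤ y ⬝ᵥ (S t *ᵥ y) := epl_quad_lower x σ t y
    rw [hSy, dotProduct_comm] at hlow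
    have hcs : (x t ⬝ᵥ y) ^ 2 ≤ (x t ⬝ᵥ x t) * (y ⬝ᵥ y) := by
      simpa [dotProduct, pow_two] using Finset.sum_mul_sq_le_sq_mul_sq Finset.univ (x t) y
    have hyy : 0 ≤ y ⬝ᵥ y := by
      simpa [dotProduct, pow_two] using
        Finset.sum_nonneg (fun i (_ : i ∈ Finset.univ) => mul_self_nonneg (y i))
    have hq : q t = x t ⬝ᵥ y := rfl
    have hxy : x t ⬝ᵥ y = y ⬝ᵥ x t := dotProduct_comm _ _
    have hxxt := hxx t ht
    have hp0 : 0 ≤ y ⬝ᵥ x t := by rw [← hxy, ← hq]; exact hq0 t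
    have h5 : (y ⬝ᵥ x t) ^ 2 ≤ (x t ⬝ᵥ x t) * (y ⬝ᵥ y) := by rw [← hxy]; exact hcs
    have h6 : (x t ⬝ᵥ x t) * (y ⬝ᵥ y) ≤ σ * (y ⬝ᵥ y) :=
      mul_le_mul_of_nonneg_right (hxxt.trans hσ) hyy
    have h7 : (y ⬝ᵥ x t) ^ 2 ≤ y ⬝ᵥ x t := h5.trans (h6.trans hlow)
    rw [hq, hxy]
    nlinarith [h7, hp0]
  -- determinant recursion
  have hdet : ∀ t, (S (t+1)).det = (S t).det * (1 + q t) := by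
    intro t
    have hst : S (t+1) = S t + vecMulVec (x t) (x t) := by
      simp only [hS, Finset.sum_range_succ]
      rw [add_right_comm]
    rw [hst, epl_det_rank_one (S t) (isUnit_iff_ne_zero.mpr (hpos t).det_pos.ne') (x t)]
  have hdetprod : ∀ t, (S t).det = σ ^ d * ∏ τ ∈ Finset.range t, (1 + q τ) := by
    intro t
    induction t with
    | zero =>
        simp only [hS, Finset.range_zero, Finset.sum_empty, zero_add, Finset.prod_empty, mul_one]
        rw [det_smul, det_one, mul_one]
        simp
    | succ n ih =>
        rw [hdet n, ih, Finset.prod_range_succ, mul_assoc]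
  -- trace bound
  have htreq : (S T).trace = (∑ τ ∈ Finset.range T, x τ ⬝ᵥ x τ) + σ * d := by
    rw [hS]
    rw [Matrix.trace_add, Matrix.trace_sum, Matrix.trace_smul, Matrix.trace_one]
    congr 1
    rw [smul_eq_mul, Fintype.card_fin]
  have htrace : (S T).trace ≤ T * B ^ 2 + σ * d := by
    rw [htreq]
    have h2 : (∑ τ ∈ Finset.range T, x τ ⬝ᵥ x τ) ≤ T * B ^ 2 := by
      calc (∑ τ ∈ Finset.range T, x τ ⬝ᵥ x τ) ≤ ∑ τ ∈ Finset.range T, B ^ 2 :=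
            Finset.sum_le_sum fun τ hτ => hxx τ (Finset.mem_range.mp hτ)
        _ = T * B ^ 2 := by rw [Finset.sum_const, Finset.card_range, nsmul_eq_mul]
    linarith
  -- determinant upper bound
  have hdT : (0:ℝ) < d := Nat.cast_pos.mpr hd
  have htr0 : 0 ≤ (S T).trace := by
    rw [htreq]
    have : 0 ≤ ∑ τ ∈ Finset.range T, x τ ⬝ᵥ x τ :=
      Finset.sum_nonneg fun τ _ => by
        simpa [dotProduct, pow_two] using
          Finset.sum_nonneg (fun i (_ : i ∈ Finset.univ) => mul_self_nonneg (x τ i))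
    positivity
  have hdetub : (S T).det ≤ ((T * B ^ 2 + σ * d) / d) ^ d := by
    refine le_trans (epl_det_le_trace_pow hd (hpos T)) ?_
    exact pow_le_pow_left₀ (by positivity) (div_le_div_of_nonneg_right htrace hdT.le) d
  -- product bound
  have hprodpos : ∀ τ, (0:ℝ) < 1 + q τ := fun τ => by linarith [hq0 τ]
  have hLpos : (0:ℝ) ≤ 1 + T * B ^ 2 / (σ * d) := by positivity
  have hprodub : (∏ τ ∈ Finset.range T, (1 + q τ)) ≤ (1 + T * B ^ 2 / (σ * d)) ^ d := by
    have h1 : (∏ τ ∈ Finset.range T, (1 + q τ)) = (S T).det / σ ^ d := by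
      rw [hdetprod T]; field_simp
    rw [h1, div_le_iff₀ (by positivity)]
    calc (S T).det ≤ ((T * B ^ 2 + σ * d) / d) ^ d := hdetub
      _ = (1 + T * B ^ 2 / (σ * d)) ^ d * σ ^ d := by
          rw [← mul_pow]
          congr 1
          field_simp
          ring
  -- sum of q bound
  have hsumq : (∑ t ∈ Finset.range T, q t) ≤ 2 * d * Real.log (1 + T * B ^ 2 / (σ * d)) := by
    calc (∑ t ∈ Finset.range T, q t)
        ≤ ∑ t ∈ Finset.range T, 2 * Real.log (1 + q t) :=
          Finset.sum_le_sum fun t ht =>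
            epl_scalar_log (hq0 t) (hq1 t (Finset.mem_range.mp ht))
      _ = 2 * Real.log (∏ τ ∈ Finset.range T, (1 + q τ)) := by
          rw [← Finset.mul_sum, Real.log_prod fun τ _ => (hprodpos τ).ne']
      _ ≤ 2 * Real.log ((1 + T * B ^ 2 / (σ * d)) ^ d) := by
          have hpp : (0:ℝ) < ∏ τ ∈ Finset.range T, (1 + q τ) :=
            Finset.prod_pos fun τ _ => hprodpos τ
          have := Real.log_le_log hpp hprodub
          linarith
      _ = 2 * d * Real.log (1 + T * B ^ 2 / (σ * d)) := by
          rw [Real.log_pow]; ring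
  -- Cauchy-Schwarz assembly
  have hcs2 : (∑ t ∈ Finset.range T, Real.sqrt (q t)) ^ 2 ≤ T * ∑ t ∈ Finset.range T, q t := by
    have h := Finset.sum_mul_sq_le_sq_mul_sq (Finset.range T)
      (fun _ => (1:ℝ)) (fun t => Real.sqrt (q t))
    simp only [one_mul, one_pow, Finset.sum_const, Finset.card_range, nsmul_eq_mul, mul_one] at h
    calc (∑ t ∈ Finset.range T, Real.sqrt (q t)) ^ 2
        ≤ (T:ℝ) * ∑ t ∈ Finset.range T, Real.sqrt (q t) ^ 2 := h
      _ = T * ∑ t ∈ Finset.range T, q t := by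
          congr 1
          exact Finset.sum_congr rfl fun t _ => Real.sq_sqrt (hq0 t)
  have hsum_nonneg : 0 ≤ ∑ t ∈ Finset.range T, Real.sqrt (q t) :=
    Finset.sum_nonneg fun t _ => Real.sqrt_nonneg _
  have hlog0 : 0 ≤ Real.log (1 + T * B ^ 2 / (σ * d)) :=
    Real.log_nonneg (le_add_of_nonneg_right (by positivity))
  show (∑ t ∈ Finset.range T, Real.sqrt (q t)) ≤ _
  rw [Real.le_sqrt hsum_nonneg (by positivity)]
  calc (∑ t ∈ Finset.range T, Real.sqrt (q t)) ^ 2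
      ≤ T * ∑ t ∈ Finset.range T, q t := hcs2
    _ ≤ T * (2 * d * Real.log (1 + T * B ^ 2 / (σ * d))) := by
        apply mul_le_mul_of_nonneg_left hsumq (Nat.cast_nonneg T)
    _ = 2 * d * T * Real.log (1 + T * B ^ 2 / (σ * d)) := by ring
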